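/- In the subset automaton for L_n* described below, every subset of the form {0} ∪ S with S ⊆ {1,…,n−1} is reachable from the initial state {s}, and every nonempty subset S ⊆ {1,…,n−2} is reachable. -/

import Mathlib

namespace SAR

/-- the `a`-action on states, deterministic part: fixes 0, cycles 1,…,n−1. -/
def sh (n : ℕ) (q : Fin n) : Fin n :=
  if h : q.val + 1 < n then (if q.val = 0 then q else ⟨q.val + 1, h⟩)
  else ⟨1 % n, Nat.mod_lt 1 q.pos⟩

lemma sh_val {n : ℕ} (hn : 3 ≤ n) (q : Fin n) (hq : 1 ≤ q.val) :
    (sh n q).val = q.val % (n - 1) + 1 := by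
  have h2 := q.isLt
  unfold sh
  by_cases h : q.val + 1 < n
  · rw [dif_pos h, if_neg (by omega)]
    simp only []
    have : q.val < n - 1 := by omega
    rw [Nat.mod_eq_of_lt this]
  · rw [dif_neg h]
    have hq1 : q.val = n - 1 := by omega
    show 1 % n = q.val % (n - 1) + 1
    rw [hq1, Nat.mod_self, Nat.mod_eq_of_lt (show 1 < n by omega)]

lemma sh_zero {n : ℕ} (hn : 3 ≤ n) (q : Fin n) (h : q.val = 0) : sh n q = q := by
  have h2 := q.isLt
  unfold sh
  rw [dif_pos (by omega), if_pos h]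

lemma sh_pos {n : ℕ} (hn : 3 ≤ n) (q : Fin n) (hq : 1 ≤ q.val) : 1 ≤ (sh n q).val := by
  rw [sh_val hn q hq]; omega

lemma sh_iter_val {n : ℕ} (hn : 3 ≤ n) (t : ℕ) (q : Fin n) (hq : 1 ≤ q.val) :
    ((sh n)^[t] q).val = (q.val - 1 + t) % (n - 1) + 1 := by
  induction t with
  | zero =>
    simp only [Function.iterate_zero, id_eq]
    have := q.isLt
    rw [Nat.mod_eq_of_lt (by omega)]
    omega
  | succ t ih =>
    rw [Function.iterate_succ_apply']
    have hpos : 1 ≤ ((sh n)^[t] q).val := by rw [ih]; omega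
    rw [sh_val hn _ hpos, ih]
    have hne : n - 1 ≠ 0 := by omega
    conv_rhs => rw [show q.val - 1 + (t+1) = (q.val - 1 + t) + 1 by omega]
    rw [Nat.add_mod (q.val - 1 + t) 1 (n-1), Nat.mod_eq_of_lt (show 1 < n - 1 by omega)]

lemma sh_iter_pos {n : ℕ} (hn : 3 ≤ n) (t : ℕ) (q : Fin n) (hq : 1 ≤ q.val) :
    1 ≤ ((sh n)^[t] q).val := by
  rw [sh_iter_val hn t q hq]; omega

lemma sh_iter_cycle {n : ℕ} (hn : 3 ≤ n) (q : Fin n) (hq : 1 ≤ q.val) :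
    (sh n)^[n-1] q = q := by
  apply Fin.ext
  rw [sh_iter_val hn _ q hq]
  have := q.isLt
  rw [show q.val - 1 + (n-1) = (q.val - 1) + 1 * (n-1) by omega,
    Nat.add_mul_mod_self_right, Nat.mod_eq_of_lt (by omega)]
  omega

lemma sh_iter_mul_cycle {n : ℕ} (hn : 3 ≤ n) (c : ℕ) (q : Fin n) (hq : 1 ≤ q.val) :
    (sh n)^[(n-1)*c] q = q := by
  induction c with
  | zero => simp
  | succ c ih =>
    rw [show (n-1)*(c+1) = (n-1)*c + (n-1) by ring, Function.iterate_add_apply,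
      sh_iter_cycle hn q hq, ih]

lemma sh_inj {n : ℕ} (hn : 3 ≤ n) {q q' : Fin n} (hq : 1 ≤ q.val) (hq' : 1 ≤ q'.val)
    (h : sh n q = sh n q') : q = q' := by
  have h1 : (sh n)^[n-1] q = (sh n)^[n-1] q' := by
    rw [show n - 1 = (n-2) + 1 by omega, Function.iterate_succ_apply,
      Function.iterate_succ_apply, h]
  rwa [sh_iter_cycle hn q hq, sh_iter_cycle hn q' hq'] at h1

lemma sh_iter_inj {n : ℕ} (hn : 3 ≤ n) (t : ℕ) {q q' : Fin n} (hq : 1 ≤ q.val)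
    (hq' : 1 ≤ q'.val) (h : (sh n)^[t] q = (sh n)^[t] q') : q = q' := by
  induction t with
  | zero => simpa using h
  | succ t ih =>
    rw [Function.iterate_succ_apply', Function.iterate_succ_apply'] at h
    exact ih (sh_inj hn (sh_iter_pos hn t q hq) (sh_iter_pos hn t q' hq') h)

/-- Fin-level step relation mirroring the NFA steps. -/
def stepF (n : ℕ) (r : Fin n) (l : Fin 2) : Set (Fin n) :=
  if l = 0 then
    {q | (r.val = 0 ∧ q.val = 0) ∨ (1 ≤ r.val ∧ r.val ≤ n - 2 ∧ q.val = r.val + 1) ∨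
      (r.val = n - 2 ∧ q.val = 0) ∨ (r.val = n - 1 ∧ q.val = 1)}
  else
    {q | (r.val = 0 ∧ q.val = 1) ∨ (r.val = 1 ∧ q.val = 0) ∨
      (2 ≤ r.val ∧ r.val ≤ n - 2 ∧ q.val = r.val) ∨
      (r.val = n - 1 ∧ (q.val = n - 1 ∨ q.val = 0))}


lemma LA_marked {n : ℕ} (hn : 3 ≤ n) {z : Fin n} (hz : z.val = 0) {S : Set (Fin n)}
    (hS : ∀ q ∈ S, 1 ≤ q.val) :
    (⋃ q ∈ insert z S, stepF n q 0) = insert z (sh n '' S) := by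
  ext p
  simp only [Set.mem_iUnion, Set.mem_insert_iff, Set.mem_image, stepF, if_pos rfl,
    Set.mem_setOf_eq, exists_prop]
  constructor
  · rintro ⟨q, hq | hq, hc⟩
    · subst hq
      rcases hc with ⟨_, h0⟩ | ⟨h1, _⟩ | ⟨h1, _⟩ | ⟨h1, _⟩
      · left; exact Fin.ext (by omega)
      all_goals (exfalso; omega)
    · have hq1 := hS q hq
      have hlt := q.isLt
      rcases hc with ⟨h0, _⟩ | ⟨_, hle, hp⟩ | ⟨hq2, hp0⟩ | ⟨hq2, hp1⟩
      · exfalso; omega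
      · right; exact ⟨q, hq, Fin.ext (by rw [sh_val hn q hq1, Nat.mod_eq_of_lt (by omega)]; omega)⟩
      · left; exact Fin.ext (by omega)
      · right; exact ⟨q, hq, Fin.ext (by rw [sh_val hn q hq1, hq2, Nat.mod_self]; omega)⟩
  · rintro (rfl | ⟨q, hq, rfl⟩)
    · exact ⟨p, Or.inl rfl, Or.inl ⟨hz, hz⟩⟩
    · refine ⟨q, Or.inr hq, ?_⟩
      have hq1 := hS q hq
      have hlt := q.isLt
      by_cases hc : q.val = n - 1
      · exact Or.inr (Or.inr (Or.inr ⟨hc, by rw [sh_val hn q hq1, hc, Nat.mod_self]⟩))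
      · exact Or.inr (Or.inl ⟨hq1, by omega,
          by rw [sh_val hn q hq1, Nat.mod_eq_of_lt (by omega)]⟩)

lemma LA_free1 {n : ℕ} (hn : 3 ≤ n) {S : Set (Fin n)}
    (hS : ∀ q ∈ S, 1 ≤ q.val) (hS2 : ∀ q ∈ S, q.val ≠ n - 2) :
    (⋃ q ∈ S, stepF n q 0) = sh n '' S := by
  ext p
  simp only [Set.mem_iUnion, Set.mem_image, stepF, if_pos rfl, Set.mem_setOf_eq, exists_prop]
  constructor
  · rintro ⟨q, hq, hc⟩
    have hq1 := hS q hq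
    have hq2 := hS2 q hq
    have hlt := q.isLt
    rcases hc with ⟨h0, _⟩ | ⟨_, hle, hp⟩ | ⟨h0, _⟩ | ⟨h0, hp1⟩
    · exfalso; omega
    · exact ⟨q, hq, Fin.ext (by rw [sh_val hn q hq1, Nat.mod_eq_of_lt (by omega)]; omega)⟩
    · exfalso; omega
    · exact ⟨q, hq, Fin.ext (by rw [sh_val hn q hq1, h0, Nat.mod_self]; omega)⟩
  · rintro ⟨q, hq, rfl⟩
    refine ⟨q, hq, ?_⟩
    have hq1 := hS q hq
    have hlt := q.isLt
    by_cases hc : q.val = n - 1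
    · exact Or.inr (Or.inr (Or.inr ⟨hc, by rw [sh_val hn q hq1, hc, Nat.mod_self]⟩))
    · exact Or.inr (Or.inl ⟨hq1, by omega,
        by rw [sh_val hn q hq1, Nat.mod_eq_of_lt (by omega)]⟩)

lemma LA_free2 {n : ℕ} (hn : 3 ≤ n) {z : Fin n} (hz : z.val = 0) {S : Set (Fin n)}
    (hS : ∀ q ∈ S, 1 ≤ q.val) (hS2 : ∃ q ∈ S, q.val = n - 2) :
    (⋃ q ∈ S, stepF n q 0) = insert z (sh n '' S) := by
  ext p
  simp only [Set.mem_iUnion, Set.mem_image, Set.mem_insert_iff, stepF, if_pos rfl,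
    Set.mem_setOf_eq, exists_prop]
  constructor
  · rintro ⟨q, hq, hc⟩
    have hq1 := hS q hq
    have hlt := q.isLt
    rcases hc with ⟨h0, _⟩ | ⟨_, hle, hp⟩ | ⟨h0, hp0⟩ | ⟨h0, hp1⟩
    · exfalso; omega
    · right; exact ⟨q, hq, Fin.ext (by rw [sh_val hn q hq1, Nat.mod_eq_of_lt (by omega)]; omega)⟩
    · left; exact Fin.ext (by omega)
    · right; exact ⟨q, hq, Fin.ext (by rw [sh_val hn q hq1, h0, Nat.mod_self]; omega)⟩
  · rintro (rfl | ⟨q, hq, rfl⟩)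
    · obtain ⟨q0, hq0, hv⟩ := hS2
      exact ⟨q0, hq0, Or.inr (Or.inr (Or.inl ⟨hv, hz⟩))⟩
    · refine ⟨q, hq, ?_⟩
      have hq1 := hS q hq
      have hlt := q.isLt
      by_cases hc : q.val = n - 1
      · exact Or.inr (Or.inr (Or.inr ⟨hc, by rw [sh_val hn q hq1, hc, Nat.mod_self]⟩))
      · exact Or.inr (Or.inl ⟨hq1, by omega,
          by rw [sh_val hn q hq1, Nat.mod_eq_of_lt (by omega)]⟩)

lemma LB_swap {n : ℕ} (hn : 3 ≤ n) {z o : Fin n} (hz : z.val = 0) (ho : o.val = 1)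
    {S : Set (Fin n)} (hS : ∀ q ∈ S, 2 ≤ q.val ∧ q.val ≤ n - 2) :
    (⋃ q ∈ insert z S, stepF n q 1) = insert o S := by
  ext p
  simp only [Set.mem_iUnion, Set.mem_insert_iff, stepF, if_neg (by decide : ¬(1 : Fin 2) = 0),
    Set.mem_setOf_eq, exists_prop]
  constructor
  · rintro ⟨q, hq | hq, hc⟩
    · subst hq
      rcases hc with ⟨_, h1⟩ | ⟨h1, _⟩ | ⟨h1, _, _⟩ | ⟨h1, _⟩
      · left; exact Fin.ext (by omega)
      all_goals (exfalso; omega)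
    · obtain ⟨hq1, hq2⟩ := hS q hq
      rcases hc with ⟨h0, _⟩ | ⟨h1, _⟩ | ⟨_, _, hp⟩ | ⟨h1, _⟩
      · exfalso; omega
      · exfalso; omega
      · right; rwa [show p = q from Fin.ext hp]
      · exfalso; omega
  · rintro (rfl | hp)
    · exact ⟨z, Or.inl rfl, Or.inl ⟨hz, ho⟩⟩
    · exact ⟨p, Or.inr hp, Or.inr (Or.inr (Or.inl ⟨(hS p hp).1, (hS p hp).2, rfl⟩))⟩

lemma LB_full {n : ℕ} (hn : 3 ≤ n) {z : Fin n} (hz : z.val = 0) :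
    (⋃ q ∈ insert z {q : Fin n | 2 ≤ q.val}, stepF n q 1)
      = insert z {q : Fin n | 1 ≤ q.val} := by
  ext p
  simp only [Set.mem_iUnion, Set.mem_insert_iff, stepF, if_neg (by decide : ¬(1 : Fin 2) = 0),
    Set.mem_setOf_eq, exists_prop]
  constructor
  · rintro ⟨q, hq | hq, hc⟩
    · subst hq
      rcases hc with ⟨_, h1⟩ | ⟨h1, _⟩ | ⟨h1, _, _⟩ | ⟨h1, _⟩
      · right; omega
      all_goals (exfalso; omega)
    · have hlt := q.isLt
      rcases hc with ⟨h0, _⟩ | ⟨h1, _⟩ | ⟨_, _, hp⟩ | ⟨h1, hp⟩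
      · exfalso; omega
      · exfalso; omega
      · right; omega
      · rcases hp with hp | hp
        · right; omega
        · left; exact Fin.ext (by omega)
  · rintro (rfl | hp)
    · exact ⟨⟨n - 1, by omega⟩, Or.inr (show 2 ≤ n - 1 by omega),
        Or.inr (Or.inr (Or.inr ⟨rfl, Or.inr hz⟩))⟩
    · have hlt := p.isLt
      by_cases h1 : p.val = 1
      · exact ⟨z, Or.inl rfl, Or.inl ⟨hz, h1⟩⟩
      · by_cases htop : p.val = n - 1
        · exact ⟨p, Or.inr (by omega),
            Or.inr (Or.inr (Or.inr ⟨htop, Or.inl htop⟩))⟩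
        · exact ⟨p, Or.inr (by omega),
            Or.inr (Or.inr (Or.inl ⟨by omega, by omega, rfl⟩))⟩


lemma image_iter_add {n : ℕ} (a b : ℕ) (T : Set (Fin n)) :
    (sh n)^[a] '' ((sh n)^[b] '' T) = (sh n)^[a + b] '' T := by
  rw [← Set.image_comp, ← Function.iterate_add]

lemma pos_image {n : ℕ} (hn : 3 ≤ n) {T : Set (Fin n)} (hT : ∀ q ∈ T, 1 ≤ q.val) (m : ℕ) :
    ∀ q ∈ (sh n)^[m] '' T, 1 ≤ q.val := by
  rintro q ⟨r, hr, rfl⟩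
  exact sh_iter_pos hn m r (hT r hr)

section Machine

variable {n : ℕ} {N : NFA (Fin 2) (Option (Fin n))}
variable (hnone : ∀ (p : Option (Fin n)) (l : Fin 2), none ∉ N.step p l)
variable (hstepa : ∀ (p : Option (Fin n)) (q : Fin n),
      some q ∈ N.step p 0 ↔
        (p = none ∧ q.val = 0) ∨
        (∃ r : Fin n, p = some r ∧
          ((r.val = 0 ∧ q.val = 0) ∨
           (1 ≤ r.val ∧ r.val ≤ n - 2 ∧ q.val = r.val + 1) ∨
           (r.val = n - 2 ∧ q.val = 0) ∨
           (r.val = n - 1 ∧ q.val = 1))))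
variable (hstepb : ∀ (p : Option (Fin n)) (q : Fin n),
      some q ∈ N.step p 1 ↔
        (p = none ∧ q.val = 1) ∨
        (∃ r : Fin n, p = some r ∧
          ((r.val = 0 ∧ q.val = 1) ∨
           (r.val = 1 ∧ q.val = 0) ∨
           (2 ≤ r.val ∧ r.val ≤ n - 2 ∧ q.val = r.val) ∨
           (r.val = n - 1 ∧ (q.val = n - 1 ∨ q.val = 0)))))

include hnone hstepa hstepb

lemma step_some (r : Fin n) (l : Fin 2) :
    N.step (some r) l = some '' stepF n r l := by
  ext x
  cases x with
  | none =>
    simp only [Set.mem_image, reduceCtorEq, and_false, exists_false, iff_false]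
    exact hnone _ _
  | some q =>
    fin_cases l
    · rw [show (⟨0, by omega⟩ : Fin 2) = 0 from rfl, hstepa]
      simp [stepF]
    · rw [show (⟨1, by omega⟩ : Fin 2) = 1 from rfl, hstepb]
      simp [stepF]

lemma stepSet_some (T : Set (Fin n)) (l : Fin 2) :
    N.stepSet (some '' T) l = some '' (⋃ q ∈ T, stepF n q l) := by
  ext x
  simp only [NFA.mem_stepSet, Set.mem_image, Set.mem_iUnion]
  constructor
  · rintro ⟨s, ⟨r, hr, rfl⟩, hx⟩
    rw [step_some hnone hstepa hstepb] at hx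
    obtain ⟨q, hq, rfl⟩ := hx
    exact ⟨q, ⟨r, hr, hq⟩, rfl⟩
  · rintro ⟨q, ⟨r, hr, hq⟩, rfl⟩
    refine ⟨some r, ⟨r, hr, rfl⟩, ?_⟩
    rw [step_some hnone hstepa hstepb]
    exact ⟨q, hq, rfl⟩

lemma reach_step {w : List (Fin 2)} {T T' : Set (Fin n)} {l : Fin 2}
    (hw : N.toDFA.eval w = some '' T) (hstep : (⋃ q ∈ T, stepF n q l) = T') :
    N.toDFA.eval (w ++ [l]) = some '' T' := by
  rw [DFA.eval_append_singleton, hw]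
  show N.stepSet (some '' T) l = _
  rw [stepSet_some hnone hstepa hstepb, hstep]

lemma reach_rot_marked (hn : 3 ≤ n) {z : Fin n} (hz : z.val = 0) (m : ℕ) :
    ∀ {T : Set (Fin n)} {w : List (Fin 2)}, (∀ q ∈ T, 1 ≤ q.val) →
      N.toDFA.eval w = some '' (insert z T) →
      ∃ w', N.toDFA.eval w' = some '' (insert z ((sh n)^[m] '' T)) := by
  induction m with
  | zero =>
    intro T w hT hw
    exact ⟨w, by simpa using hw⟩
  | succ m ih =>
    intro T w hT hw
    obtain ⟨w', hw'⟩ := ih hT hw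
    refine ⟨w' ++ [0], ?_⟩
    have h2 := reach_step hnone hstepa hstepb hw'
      (LA_marked hn hz (S := (sh n)^[m] '' T) (pos_image hn hT m))
    have himg : sh n '' ((sh n)^[m] '' T) = (sh n)^[m + 1] '' T := by
      rw [← Set.image_comp, ← Function.iterate_succ']
    rw [h2, himg]

lemma reach_rot_free (hn : 3 ≤ n) (m : ℕ) :
    ∀ {T : Set (Fin n)} {w : List (Fin 2)}, (∀ q ∈ T, 1 ≤ q.val) →
      (∀ i < m, ∀ q ∈ T, ((sh n)^[i] q).val ≠ n - 2) →
      N.toDFA.eval w = some '' T →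
      ∃ w', N.toDFA.eval w' = some '' ((sh n)^[m] '' T) := by
  induction m with
  | zero =>
    intro T w hT _ hw
    exact ⟨w, by simpa using hw⟩
  | succ m ih =>
    intro T w hT hcond hw
    obtain ⟨w', hw'⟩ := ih hT (fun i hi => hcond i (by omega)) hw
    refine ⟨w' ++ [0], ?_⟩
    have hne : ∀ q ∈ (sh n)^[m] '' T, q.val ≠ n - 2 := by
      rintro q ⟨r, hr, rfl⟩
      exact hcond m (by omega) r hr
    have h2 := reach_step hnone hstepa hstepb hw'
      (LA_free1 hn (S := (sh n)^[m] '' T) (pos_image hn hT m) hne)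
    have himg : sh n '' ((sh n)^[m] '' T) = (sh n)^[m + 1] '' T := by
      rw [← Set.image_comp, ← Function.iterate_succ']
    rw [h2, himg]

lemma reach_free_to_marked (hn : 3 ≤ n) {z : Fin n} (hz : z.val = 0)
    {T : Set (Fin n)} {w : List (Fin 2)} (hT : ∀ q ∈ T, 1 ≤ q.val) (hne : T.Nonempty)
    (hw : N.toDFA.eval w = some '' T) :
    ∀ m, 2 * n ≤ m → ∃ w', N.toDFA.eval w' = some '' (insert z ((sh n)^[m] '' T)) := by
  classical
  obtain ⟨x, hx⟩ := hne
  have hxpos := hT x hx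
  have hxlt := x.isLt
  have hex : ∃ i, ∃ q ∈ T, ((sh n)^[i] q).val = n - 2 := by
    refine ⟨2 * n - 3 - x.val, x, hx, ?_⟩
    rw [sh_iter_val hn _ x hxpos,
      show x.val - 1 + (2 * n - 3 - x.val) = (n - 3) + 1 * (n - 1) by omega,
      Nat.add_mul_mod_self_right, Nat.mod_eq_of_lt (by omega)]
    omega
  set i1 := Nat.find hex with hi1
  obtain ⟨q0, hq0, hq0v⟩ := Nat.find_spec hex
  have hmin : ∀ i < i1, ∀ q ∈ T, ((sh n)^[i] q).val ≠ n - 2 := by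
    intro i hi q hq h
    exact Nat.find_min hex hi ⟨q, hq, h⟩
  have hle : i1 ≤ 2 * n - 3 - x.val := Nat.find_min' hex ⟨x, hx, by
    rw [sh_iter_val hn _ x hxpos,
      show x.val - 1 + (2 * n - 3 - x.val) = (n - 3) + 1 * (n - 1) by omega,
      Nat.add_mul_mod_self_right, Nat.mod_eq_of_lt (by omega)]
    omega⟩
  intro m hm
  have hi1m : i1 + 1 ≤ m := by omega
  obtain ⟨w1, hw1⟩ := reach_rot_free hnone hstepa hstepb hn i1 hT hmin hw
  have hw2 := reach_step hnone hstepa hstepb hw1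
    (LA_free2 hn hz (S := (sh n)^[i1] '' T) (pos_image hn hT i1)
      ⟨(sh n)^[i1] q0, ⟨q0, hq0, rfl⟩, hq0v⟩)
  have hw2' : N.toDFA.eval (w1 ++ [0]) = some '' (insert z ((sh n)^[i1 + 1] '' T)) := by
    have himg : sh n '' ((sh n)^[i1] '' T) = (sh n)^[i1 + 1] '' T := by
      rw [← Set.image_comp, ← Function.iterate_succ']
    rw [hw2, himg]
  obtain ⟨w3, hw3⟩ := reach_rot_marked hnone hstepa hstepb hn hz (m - (i1 + 1))
    (pos_image hn hT (i1 + 1)) hw2'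
  refine ⟨w3, ?_⟩
  rw [hw3, image_iter_add, show m - (i1 + 1) + (i1 + 1) = m by omega]


lemma reach_base (hn : 3 ≤ n) (hstart : N.start = {none}) :
    N.toDFA.eval [0] = some '' (insert (⟨0, Nat.lt_of_lt_of_le (Nat.zero_lt_succ 2) hn⟩ : Fin n) (∅ : Set (Fin n))) := by
  rw [show ([0] : List (Fin 2)) = [] ++ [0] from rfl, DFA.eval_append_singleton, DFA.eval_nil]
  show N.stepSet N.start 0 = _
  rw [hstart]
  have h1 : N.stepSet {none} 0 = N.step none 0 := by
    simp [NFA.stepSet]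
  rw [h1]
  ext x
  cases x with
  | none =>
    simp only [Set.mem_image, reduceCtorEq, and_false, exists_false, iff_false]
    exact hnone _ _
  | some q =>
    rw [hstepa]
    constructor
    · rintro (⟨-, h⟩ | ⟨r, hr, -⟩)
      · exact ⟨⟨0, Nat.lt_of_lt_of_le (Nat.zero_lt_succ 2) hn⟩, Or.inl rfl, Option.some_inj.mpr (Fin.ext h.symm)⟩
      · cases hr
    · rintro ⟨r, hr, hqr⟩
      rcases hr with h | h
      · left
        refine ⟨rfl, ?_⟩
        rw [← Option.some_inj.mp hqr, h]
      · exact absurd h (Set.notMem_empty r)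

lemma part1 (hn : 3 ≤ n) (hstart : N.start = {none}) :
    ∀ (k : ℕ) (S : Set (Fin n)), (∀ q ∈ S, 1 ≤ q.val) → S.ncard = k →
      ∃ w, N.toDFA.eval w = some '' (insert (⟨0, Nat.lt_of_lt_of_le (Nat.zero_lt_succ 2) hn⟩ : Fin n) S) := by
  intro k
  induction k with
  | zero =>
    intro S hS hcard
    rw [(Set.ncard_eq_zero S.toFinite).1 hcard]
    exact ⟨[0], reach_base hnone hstepa hstepb hn hstart⟩
  | succ k ih =>
    intro S hS hcard
    classical
    by_cases hfull : ∀ q : Fin n, 1 ≤ q.val → q ∈ S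
    · -- S is everything except 0
      have hSeq : S = {q : Fin n | 1 ≤ q.val} :=
        Set.Subset.antisymm (fun q hq => hS q hq) (fun q hq => hfull q hq)
      have hoR : (⟨1, by omega⟩ : Fin n) ∉ {q : Fin n | 2 ≤ q.val} := by
        simp only [Set.mem_setOf_eq]; omega
      have hRS : insert (⟨1, by omega⟩ : Fin n) {q : Fin n | 2 ≤ q.val} = S := by
        rw [hSeq]; ext q
        simp only [Set.mem_insert_iff, Set.mem_setOf_eq, Fin.ext_iff]
        omega
      have hcardR : ({q : Fin n | 2 ≤ q.val} : Set (Fin n)).ncard = k := by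
        have h2 := Set.ncard_insert_of_notMem hoR
        rw [hRS, hcard] at h2
        omega
      obtain ⟨w0, hw0⟩ := ih {q : Fin n | 2 ≤ q.val} (fun q hq => by
        simp only [Set.mem_setOf_eq] at hq; omega) hcardR
      refine ⟨w0 ++ [1], ?_⟩
      rw [reach_step hnone hstepa hstepb hw0 (LB_full hn (z := ⟨0, Nat.lt_of_lt_of_le (Nat.zero_lt_succ 2) hn⟩) rfl), hSeq]
    · -- S misses some positive y
      have hSne : S.Nonempty := Set.nonempty_of_ncard_ne_zero (by omega)
      push_neg at hfull
      obtain ⟨y, hy1, hyS⟩ := hfull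
      have hylt := y.isLt
      obtain ⟨x0, hx0⟩ := hSne
      have hx0pos := hS x0 hx0
      have hx0lt := x0.isLt
      have hex : ∃ t, (sh n)^[t] y ∈ S := by
        refine ⟨x0.val - 1 + (n - 1) - (y.val - 1), ?_⟩
        have heq : (sh n)^[x0.val - 1 + (n - 1) - (y.val - 1)] y = x0 := by
          refine Fin.ext ?_
          rw [sh_iter_val hn _ y hy1,
            show y.val - 1 + (x0.val - 1 + (n - 1) - (y.val - 1))
              = (x0.val - 1) + 1 * (n - 1) by omega,
            Nat.add_mul_mod_self_right, Nat.mod_eq_of_lt (by omega)]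
          omega
        rw [heq]; exact hx0
      set t1 := Nat.find hex with ht1def
      have ht1S : (sh n)^[t1] y ∈ S := Nat.find_spec hex
      have ht1pos : 1 ≤ t1 := by
        rcases Nat.eq_zero_or_pos t1 with h | h
        · exfalso; apply hyS; have := ht1S; rwa [h, Function.iterate_zero, id_eq] at this
        · exact h
      set x := (sh n)^[t1] y with hxdef
      set p := (sh n)^[t1 - 1] y with hpdef
      have hpS : p ∉ S := Nat.find_min hex (show t1 - 1 < t1 by omega)
      have hpx : sh n p = x := by
        have h := Function.iterate_succ_apply' (sh n) (t1 - 1) y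
        rw [Nat.succ_eq_add_one, show t1 - 1 + 1 = t1 by omega] at h
        exact h.symm
      have hppos : 1 ≤ p.val := sh_iter_pos hn _ y hy1
      have hxpos : 1 ≤ x.val := hS x ht1S
      have hxlt := x.isLt
      set R := S \ {x} with hRdef
      have hRpos : ∀ q ∈ R, 1 ≤ q.val := fun q hq => hS q hq.1
      have hcardR : R.ncard = k := by
        have h2 := Set.ncard_diff_singleton_of_mem ht1S
        rw [hcard] at h2
        simpa using h2
      obtain ⟨w0, hw0⟩ := ih R hRpos hcardR
      set j := n - x.val with hjdef
      have hj1 : 1 ≤ j := by omega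
      obtain ⟨w1, hw1⟩ := reach_rot_marked hnone hstepa hstepb hn
        (z := ⟨0, Nat.lt_of_lt_of_le (Nat.zero_lt_succ 2) hn⟩) rfl j hRpos hw0
      set Tj := (sh n)^[j] '' R with hTjdef
      have hTjpos := pos_image hn hRpos j
      have hjx : (sh n)^[j] x = (⟨1, by omega⟩ : Fin n) := by
        refine Fin.ext ?_
        rw [sh_iter_val hn _ x hxpos,
          show x.val - 1 + (n - x.val) = 0 + 1 * (n - 1) by omega,
          Nat.add_mul_mod_self_right, Nat.mod_eq_of_lt (by omega)]
      have hjp : (sh n)^[j] p = (⟨n - 1, by omega⟩ : Fin n) := by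
        have hstep := Function.iterate_succ_apply (sh n) (j - 1) p
        rw [Nat.succ_eq_add_one, show j - 1 + 1 = j by omega] at hstep
        rw [hstep, hpx]
        refine Fin.ext ?_
        rw [sh_iter_val hn _ x hxpos,
          show x.val - 1 + (j - 1) = n - 2 by omega,
          Nat.mod_eq_of_lt (by omega)]
        show n - 2 + 1 = n - 1
        omega
      have hTj1 : ∀ q ∈ Tj, 2 ≤ q.val ∧ q.val ≤ n - 2 := by
        rintro q ⟨r, hr, rfl⟩
        have hrpos := hRpos r hr
        have hqpos : 1 ≤ ((sh n)^[j] r).val := sh_iter_pos hn j r hrpos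
        have hqlt := ((sh n)^[j] r).isLt
        constructor
        · by_contra h
          have hv1 : ((sh n)^[j] x).val = 1 := by rw [hjx]
          have heq : (sh n)^[j] r = (sh n)^[j] x := Fin.ext (by omega)
          have := sh_iter_inj hn j hrpos hxpos heq
          exact hr.2 this
        · by_contra h
          have hv2 : ((sh n)^[j] p).val = n - 1 := by rw [hjp]
          have heq : (sh n)^[j] r = (sh n)^[j] p := Fin.ext (by omega)
          have := sh_iter_inj hn j hrpos hppos heq
          exact hpS (this ▸ hr.1)
      have hw2 := reach_step hnone hstepa hstepb hw1 (LB_swap hn (z := ⟨0, Nat.lt_of_lt_of_le (Nat.zero_lt_succ 2) hn⟩) (o := ⟨1, by omega⟩) rfl rfl hTj1)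
      have hQpos : ∀ q ∈ insert (⟨1, by omega⟩ : Fin n) Tj, 1 ≤ q.val := by
        rintro q (rfl | hq)
        · exact le_refl 1
        · exact hTjpos q hq
      obtain ⟨w3, hw3⟩ := reach_free_to_marked hnone hstepa hstepb hn (z := ⟨0, Nat.lt_of_lt_of_le (Nat.zero_lt_succ 2) hn⟩) rfl hQpos
        ⟨⟨1, by omega⟩, Or.inl rfl⟩ hw2 (x.val - 1 + 3 * (n - 1)) (by omega)
      refine ⟨w3, ?_⟩
      rw [hw3]
      have himg : (sh n)^[x.val - 1 + 3 * (n - 1)] '' (insert (⟨1, by omega⟩ : Fin n) Tj)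
          = S := by
        rw [Set.image_insert_eq]
        have hMo : (sh n)^[x.val - 1 + 3 * (n - 1)] (⟨1, by omega⟩ : Fin n) = x := by
          refine Fin.ext ?_
          rw [sh_iter_val hn _ _ (le_refl 1),
            show (1 : ℕ) - 1 + (x.val - 1 + 3 * (n - 1)) = (x.val - 1) + 3 * (n - 1) by omega,
            Nat.add_mul_mod_self_right, Nat.mod_eq_of_lt (by omega)]
          omega
        have hMT : (sh n)^[x.val - 1 + 3 * (n - 1)] '' Tj = R := by
          rw [hTjdef, image_iter_add, show x.val - 1 + 3 * (n - 1) + j = (n - 1) * 4 by omega]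
          ext q
          simp only [Set.mem_image]
          constructor
          · rintro ⟨r, hr, rfl⟩
            rwa [sh_iter_mul_cycle hn 4 r (hRpos r hr)]
          · intro hq
            exact ⟨q, hq, sh_iter_mul_cycle hn 4 q (hRpos q hq)⟩
        rw [hMo, hMT, hRdef, Set.insert_diff_singleton, Set.insert_eq_of_mem ht1S]
      rw [himg]

lemma part2 (hn : 3 ≤ n) (hstart : N.start = {none}) (S : Set (Fin n)) (hne : S.Nonempty)
    (hS : ∀ q ∈ S, 1 ≤ q.val ∧ q.val ≤ n - 2) :
    ∃ w, N.toDFA.eval w = some '' S := by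
  obtain ⟨x, hx, hmin⟩ := Set.exists_min_image S (fun q => q.val) S.toFinite hne
  obtain ⟨hx1, hx2⟩ := hS x hx
  set m := x.val - 1 with hmdef
  set T0 := (sh n)^[n - 1 - m] '' S with hT0def
  have hT0val : ∀ q ∈ S, ((sh n)^[n - 1 - m] q).val = q.val - m := by
    intro q hq
    obtain ⟨hq1, hq2⟩ := hS q hq
    have hqm := hmin q hq
    rw [sh_iter_val hn _ q hq1,
      show q.val - 1 + (n - 1 - m) = (q.val - 1 - m) + 1 * (n - 1) by omega,
      Nat.add_mul_mod_self_right, Nat.mod_eq_of_lt (by omega)]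
    omega
  have hoT0 : (⟨1, by omega⟩ : Fin n) ∈ T0 := by
    refine ⟨x, hx, Fin.ext ?_⟩
    rw [hT0val x hx]
    show x.val - m = 1
    omega
  set T := T0 \ {(⟨1, by omega⟩ : Fin n)} with hTdef
  have hT : ∀ q ∈ T, 2 ≤ q.val ∧ q.val ≤ n - 2 := by
    rintro q ⟨⟨r, hr, rfl⟩, hq2⟩
    obtain ⟨hr1, hr2⟩ := hS r hr
    have hrm := hmin r hr
    have hval := hT0val r hr
    constructor
    · rcases Nat.lt_or_ge ((sh n)^[n - 1 - m] r).val 2 with h | h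
      · exfalso
        have hpos : 1 ≤ ((sh n)^[n - 1 - m] r).val := sh_iter_pos hn _ r hr1
        exact hq2 (Fin.ext (show _ = (1 : ℕ) by omega))
      · exact h
    · omega
  obtain ⟨w0, hw0⟩ := part1 hnone hstepa hstepb hn hstart (T.ncard) T
    (fun q hq => by have := hT q hq; omega) rfl
  have hw1 := reach_step hnone hstepa hstepb hw0 (LB_swap hn (z := ⟨0, Nat.lt_of_lt_of_le (Nat.zero_lt_succ 2) hn⟩) (o := ⟨1, by omega⟩) rfl rfl hT)
  have hT0T : insert (⟨1, by omega⟩ : Fin n) T = T0 := by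
    rw [hTdef, Set.insert_diff_singleton, Set.insert_eq_of_mem hoT0]
  rw [hT0T] at hw1
  have hT0pos : ∀ q ∈ T0, 1 ≤ q.val := by
    rintro q ⟨r, hr, rfl⟩
    exact sh_iter_pos hn _ r (hS r hr).1
  have hcond : ∀ i < m, ∀ q ∈ T0, ((sh n)^[i] q).val ≠ n - 2 := by
    rintro i hi q ⟨r, hr, rfl⟩
    obtain ⟨hr1, hr2⟩ := hS r hr
    have hrm := hmin r hr
    have hval := hT0val r hr
    rw [← Function.iterate_add_apply, sh_iter_val hn _ r hr1,
      show r.val - 1 + (i + (n - 1 - m)) = (r.val - 1 - m + i) + 1 * (n - 1) by omega,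
      Nat.add_mul_mod_self_right, Nat.mod_eq_of_lt (by omega)]
    omega
  obtain ⟨w2, hw2⟩ := reach_rot_free hnone hstepa hstepb hn m hT0pos hcond hw1
  refine ⟨w2, ?_⟩
  rw [hw2, hT0def, image_iter_add, show m + (n - 1 - m) = (n - 1) * 1 by omega]
  have himg : (sh n)^[(n - 1) * 1] '' S = S := by
    ext q
    simp only [Set.mem_image]
    constructor
    · rintro ⟨r, hr, rfl⟩
      rwa [sh_iter_mul_cycle hn 1 r (hS r hr).1]
    · intro hq
      exact ⟨q, hq, sh_iter_mul_cycle hn 1 q (hS q hq).1⟩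
  rw [himg]

end Machine

end SAR

/-- Reachability in the subset automaton for `L_n∗`. Fix `n ≥ 3` and the NFA over
`{a,b}` (encoded as `Fin 2`, `a = 0`, `b = 1`) with states `{s, 0, 1, …, n−1}`
(encoded as `Option (Fin n)` with `s = none`), initial state `s`, where
`a` acts on `{0,…,n−1}` as the cycle `(1,…,n−1)` fixing `0`, plus `s →ᵃ 0` and
`(n−2) →ᵃ 0`; and `b` acts as the transposition `(0,1)`, plus `s →ᵇ 1` and
`(n−1) →ᵇ 0`. Then in the determinization (`N.toDFA`), every subset `{0} ∪ S` with
`S ⊆ {1,…,n−1}` is reachable from the initial subset, and every nonempty subset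
`S ⊆ {1,…,n−2}` is reachable. -/
theorem subset_automaton_reachability (n : ℕ) (hn : 3 ≤ n) (N : NFA (Fin 2) (Option (Fin n)))
    (hstart : N.start = {none})
    (hnone : ∀ (p : Option (Fin n)) (l : Fin 2), none ∉ N.step p l)
    (hstepa : ∀ (p : Option (Fin n)) (q : Fin n),
      some q ∈ N.step p 0 ↔
        (p = none ∧ q.val = 0) ∨
        (∃ r : Fin n, p = some r ∧
          ((r.val = 0 ∧ q.val = 0) ∨
           (1 ≤ r.val ∧ r.val ≤ n - 2 ∧ q.val = r.val + 1) ∨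
           (r.val = n - 2 ∧ q.val = 0) ∨
           (r.val = n - 1 ∧ q.val = 1))))
    (hstepb : ∀ (p : Option (Fin n)) (q : Fin n),
      some q ∈ N.step p 1 ↔
        (p = none ∧ q.val = 1) ∨
        (∃ r : Fin n, p = some r ∧
          ((r.val = 0 ∧ q.val = 1) ∨
           (r.val = 1 ∧ q.val = 0) ∨
           (2 ≤ r.val ∧ r.val ≤ n - 2 ∧ q.val = r.val) ∨
           (r.val = n - 1 ∧ (q.val = n - 1 ∨ q.val = 0))))) :
    (∀ S : Set (Fin n), (∀ q ∈ S, q.val ≠ 0) →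
      ∃ w : List (Fin 2),
        N.toDFA.eval w = insert (some (⟨0, by omega⟩ : Fin n)) (Option.some '' S)) ∧
    (∀ S : Set (Fin n), S.Nonempty → (∀ q ∈ S, 1 ≤ q.val ∧ q.val ≤ n - 2) →
      ∃ w : List (Fin 2), N.toDFA.eval w = Option.some '' S) := by
  constructor
  · intro S hSpos
    obtain ⟨w, hw⟩ := SAR.part1 hnone hstepa hstepb hn hstart S.ncard S
      (fun q hq => by have := hSpos q hq; omega) rfl
    exact ⟨w, by rw [hw, Set.image_insert_eq]⟩
  · intro S hne hS
    exact SAR.part2 hnone hstepa hstepb hn hstart S hne hS
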